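/- Greedy (1 − 1/e) guarantee applied to the coreset objective: let K be a positive natural number and let S_0 = ∅, S_t = S_{t−1} ∪ {j_t} for t = 1, …, K, where at each step j_t ∈ M \ S_{t−1} maximizes J(S_{t−1} ∪ {j}) over all j ∉ S_{t−1} (assume K ≤ |M|). Then J(S_K) ≥ (1 − 1/e) · max{ J(S) : S ⊆ M, |S| ≤ K }. -/

import Mathlib

/-- Coreset objective: `J(S) = ∑ i, max_{j ∈ S} r i j` for nonempty `S`, and `J(∅) = 0`. -/
noncomputable def J {N : ℕ} {M : Type*} (r : Fin N → M → ℝ) (S : Finset M) : ℝ :=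
  if h : S.Nonempty then ∑ i, S.sup' h (r i) else 0

section Aux

variable {N : ℕ} {M : Type*} [DecidableEq M] (r : Fin N → M → ℝ)

noncomputable def gAux (S : Finset M) (i : Fin N) : ℝ :=
  if h : S.Nonempty then S.sup' h (r i) else 0

lemma J_eq_sum (S : Finset M) : J r S = ∑ i, gAux r S i := by
  unfold J gAux
  split
  · rfl
  · simp

lemma le_gAux {S : Finset M} {j : M} (hj : j ∈ S) (i : Fin N) : r i j ≤ gAux r S i := by
  unfold gAux
  rw [dif_pos ⟨j, hj⟩]
  exact Finset.le_sup' (r i) hj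

lemma gAux_nonneg (hr : ∀ i j, 0 < r i j) (S : Finset M) (i : Fin N) : 0 ≤ gAux r S i := by
  rcases S.eq_empty_or_nonempty with h | h
  · simp [gAux, h]
  · obtain ⟨j, hj⟩ := h
    exact le_trans (hr i j).le (le_gAux r hj i)

lemma gAux_mono (hr : ∀ i j, 0 < r i j) {S T : Finset M} (h : S ⊆ T) (i : Fin N) : gAux r S i ≤ gAux r T i := by
  rcases S.eq_empty_or_nonempty with hS | hS
  · rw [hS]; simpa [gAux] using gAux_nonneg r hr T i
  · obtain ⟨j, hj⟩ := hS
    unfold gAux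
    rw [dif_pos ⟨j, hj⟩, dif_pos ⟨j, h hj⟩]
    apply Finset.sup'_le
    intro b hb
    exact Finset.le_sup' (r i) (h hb)

lemma gAux_key (hr : ∀ i j, 0 < r i j) (S T : Finset M) (i : Fin N) :
    gAux r T i ≤ gAux r S i + ∑ j ∈ T \ S, (gAux r (insert j S) i - gAux r S i) := by
  have hnn : ∀ j ∈ T \ S, 0 ≤ gAux r (insert j S) i - gAux r S i := fun j _ =>
    sub_nonneg.mpr (gAux_mono r hr (Finset.subset_insert j S) i)
  rcases T.eq_empty_or_nonempty with hT | hT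
  · rw [hT]
    simp only [Finset.empty_sdiff, Finset.sum_empty, add_zero] at *
    simpa [gAux] using gAux_nonneg r hr S i
  · obtain ⟨j0, hj0, hEq⟩ := Finset.exists_mem_eq_sup' hT (r i)
    have hgT : gAux r T i = r i j0 := by
      unfold gAux; rw [dif_pos hT]; exact hEq
    by_cases hj0S : j0 ∈ S
    · have h1 : gAux r T i ≤ gAux r S i := hgT ▸ le_gAux r hj0S i
      have h2 : 0 ≤ ∑ j ∈ T \ S, (gAux r (insert j S) i - gAux r S i) :=
        Finset.sum_nonneg hnn
      linarith
    · have hmem : j0 ∈ T \ S := Finset.mem_sdiff.mpr ⟨hj0, hj0S⟩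
      have h1 : gAux r T i ≤ gAux r (insert j0 S) i :=
        hgT ▸ le_gAux r (Finset.mem_insert_self j0 S) i
      have h2 : gAux r (insert j0 S) i - gAux r S i ≤
          ∑ j ∈ T \ S, (gAux r (insert j S) i - gAux r S i) :=
        Finset.single_le_sum hnn hmem
      linarith

variable [Fintype M]

lemma J_nonneg (hr : ∀ i j, 0 < r i j) (S : Finset M) : 0 ≤ J r S := by
  rw [J_eq_sum]
  exact Finset.sum_nonneg fun i _ => gAux_nonneg r hr S i

lemma J_mono (hr : ∀ i j, 0 < r i j) {S T : Finset M} (h : S ⊆ T) : J r S ≤ J r T := by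
  rw [J_eq_sum, J_eq_sum]
  exact Finset.sum_le_sum fun i _ => gAux_mono r hr h i

lemma J_key (hr : ∀ i j, 0 < r i j) (S T : Finset M) :
    J r T ≤ J r S + ∑ j ∈ T \ S, (J r (insert j S) - J r S) := by
  simp only [J_eq_sum]
  calc ∑ i, gAux r T i
        ≤ ∑ i, (gAux r S i + ∑ j ∈ T \ S, (gAux r (insert j S) i - gAux r S i)) :=
          Finset.sum_le_sum fun i _ => gAux_key r hr S T i
      _ = ∑ i, gAux r S i + ∑ i, ∑ j ∈ T \ S, (gAux r (insert j S) i - gAux r S i) := by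
          rw [Finset.sum_add_distrib]
      _ = ∑ i, gAux r S i + ∑ j ∈ T \ S, ∑ i, (gAux r (insert j S) i - gAux r S i) := by
          rw [Finset.sum_comm]
      _ = ∑ i, gAux r S i + ∑ j ∈ T \ S, (∑ i, gAux r (insert j S) i - ∑ i, gAux r S i) := by
          congr 1
          exact Finset.sum_congr rfl fun j _ => Finset.sum_sub_distrib _ _

end Aux

/-- Greedy `(1 − 1/e)` guarantee applied to the coreset objective: with `S 0 = ∅` and
`S t = S (t-1) ∪ {j t}` for `t = 1, …, K`, where at each step `j t ∉ S (t-1)` maximizes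
`J (S (t-1) ∪ {j})` over all `j ∉ S (t-1)` (and `K ≤ |M|`), we have
`J (S K) ≥ (1 − 1/e) · max { J T : T ⊆ M, |T| ≤ K }`. -/
theorem greedy_guarantee {N : ℕ} {M : Type*} [Fintype M] [DecidableEq M]
    (hN : 0 < N) (r : Fin N → M → ℝ) (hr : ∀ i j, 0 < r i j)
    (K : ℕ) (hK : 0 < K) (hKM : K ≤ Fintype.card M)
    (S : ℕ → Finset M) (j : ℕ → M)
    (hS0 : S 0 = ∅)
    (hstep : ∀ t, 1 ≤ t → t ≤ K →
      j t ∉ S (t - 1) ∧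
      S t = insert (j t) (S (t - 1)) ∧
      ∀ j' ∉ S (t - 1), J r (insert j' (S (t - 1))) ≤ J r (insert (j t) (S (t - 1)))) :
    ∀ T : Finset M, T.card ≤ K → (1 - 1 / Real.exp 1) * J r T ≤ J r (S K) := by
  intro T hT
  set OPT := J r T with hOPT
  have hJ0 : J r (S 0) = 0 := by rw [hS0]; simp [J]
  have hOPTnn : 0 ≤ OPT := J_nonneg r hr T
  have hKpos : (0:ℝ) < (K:ℝ) := by exact_mod_cast hK
  have hq : (0:ℝ) ≤ 1 - 1/(K:ℝ) := by
    have h1 : 1/(K:ℝ) ≤ 1 := by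
      rw [div_le_one hKpos]
      exact_mod_cast hK
    linarith
  -- step inequality
  have hstep' : ∀ t, t < K →
      OPT - J r (S (t+1)) ≤ (1 - 1/(K:ℝ)) * (OPT - J r (S t)) := by
    intro t htK
    obtain ⟨hjmem, hSt, hmax⟩ := hstep (t+1) (Nat.le_add_left 1 t) htK
    simp only [Nat.add_sub_cancel] at hjmem hSt hmax
    set Δ := J r (S (t+1)) - J r (S t) with hΔ
    have hΔnn : 0 ≤ Δ :=
      sub_nonneg.mpr (J_mono r hr (by rw [hSt]; exact Finset.subset_insert _ _))
    have hterm : ∀ j' ∈ T \ S t, J r (insert j' (S t)) - J r (S t) ≤ Δ := by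
      intro j' hj'
      have h := hmax j' (Finset.mem_sdiff.mp hj').2
      rw [hΔ, hSt]
      linarith
    have hcard : ((T \ S t).card : ℝ) ≤ (K : ℝ) := by
      exact_mod_cast le_trans (Finset.card_le_card Finset.sdiff_subset) hT
    have hsum : OPT ≤ J r (S t) + K * Δ := by
      have h1 := J_key r hr (S t) T
      have h2 : ∑ j' ∈ T \ S t, (J r (insert j' (S t)) - J r (S t)) ≤
          ((T \ S t).card : ℝ) * Δ := by
        have := Finset.sum_le_card_nsmul (T \ S t)
          (fun j' => J r (insert j' (S t)) - J r (S t)) Δ hterm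
        simpa [nsmul_eq_mul] using this
      have h3 : ((T \ S t).card : ℝ) * Δ ≤ (K:ℝ) * Δ :=
        mul_le_mul_of_nonneg_right hcard hΔnn
      linarith
    have hΔge : (OPT - J r (S t)) / (K:ℝ) ≤ Δ := by
      rw [div_le_iff₀ hKpos]
      nlinarith
    have hfield : (1 - 1/(K:ℝ)) * (OPT - J r (S t)) =
        (OPT - J r (S t)) - (OPT - J r (S t)) / (K:ℝ) := by
      field_simp
    rw [hfield]
    have : OPT - J r (S (t+1)) = (OPT - J r (S t)) - Δ := by rw [hΔ]; ring
    linarith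
  -- induction
  have hind : ∀ t, t ≤ K → OPT - J r (S t) ≤ (1 - 1/(K:ℝ))^t * OPT := by
    intro t
    induction t with
    | zero => intro _; simp [hJ0]
    | succ n ih =>
      intro hle
      have hn := ih (Nat.le_of_succ_le hle)
      have hs := hstep' n (Nat.lt_of_succ_le hle)
      calc OPT - J r (S (n+1)) ≤ (1 - 1/(K:ℝ)) * (OPT - J r (S n)) := hs
        _ ≤ (1 - 1/(K:ℝ)) * ((1 - 1/(K:ℝ))^n * OPT) := mul_le_mul_of_nonneg_left hn hq
        _ = (1 - 1/(K:ℝ))^(n+1) * OPT := by ring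
  have hfinal := hind K le_rfl
  have hexp : (1 - 1/(K:ℝ))^K ≤ 1 / Real.exp 1 := by
    have h1 : 1 - 1/(K:ℝ) ≤ Real.exp (-(1/(K:ℝ))) := by
      have := Real.add_one_le_exp (-(1/(K:ℝ)))
      linarith
    calc (1 - 1/(K:ℝ))^K ≤ (Real.exp (-(1/(K:ℝ))))^K := pow_le_pow_left₀ hq h1 K
      _ = Real.exp ((K:ℕ) * (-(1/(K:ℝ)))) := (Real.exp_nat_mul _ K).symm
      _ = Real.exp (-1) := by
          congr 1
          field_simp
      _ = 1 / Real.exp 1 := by rw [Real.exp_neg, inv_eq_one_div]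
  have hmul : (1 - 1/(K:ℝ))^K * OPT ≤ (1 / Real.exp 1) * OPT :=
    mul_le_mul_of_nonneg_right hexp hOPTnn
  have hpow_nn : 0 ≤ (1 - 1/(K:ℝ))^K := pow_nonneg hq K
  nlinarith
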